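/- Let (G,P) be an EDP instance and A ⊆ V(G) such that exactly one edge {ℓ,y} of G, with ℓ ∈ A and y ∉ A, has exactly one endpoint in A. Suppose exactly one terminal pair of P, namely {s,t} with s ∈ A and t ∉ A, has its endpoints on opposite sides of A, and every other pair has both endpoints in A or both in V(G)∖A. Then (G,P) is a YES-instance of EDP if and only if both of the following hold: (1) (G[A], P_A together with one additional pair {s,ℓ}) is a YES-instance of EDP, and (2) (G', P_{V(G)∖A} together with one additional pair {s',t}) is a YES-instance of EDP, where G' is obtained from G[V(G)∖A] by adding one new vertex s' whose only neighbor is y. -/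

import Mathlib

/-- A solution to an instance `(G, P)` of the Edge Disjoint Paths problem:
a family of paths, one per terminal pair, that are pairwise edge-disjoint. -/
def EDPSolution {V ι : Type*} (G : SimpleGraph V) (P : ι → V × V)
    (W : ∀ i : ι, G.Walk (P i).1 (P i).2) : Prop :=
  (∀ i, (W i).IsPath) ∧
    ∀ i j, i ≠ j → ∀ e ∈ (W i).edges, e ∉ (W j).edges

/-- `(G, P)` is a YES-instance of the Edge Disjoint Paths problem. -/
def EDPYes {V ι : Type*} (G : SimpleGraph V) (P : ι → V × V) : Prop :=
  ∃ W : ∀ i : ι, G.Walk (P i).1 (P i).2, EDPSolution G P W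

/-- The graph obtained from `G` by adding one new vertex (`none`) whose only
neighbor is `y`. -/
def addPendant {V : Type*} (G : SimpleGraph V) (y : V) : SimpleGraph (Option V) :=
  (G.map (some : V → Option V)) ⊔
    SimpleGraph.fromRel (fun a b => a = none ∧ b = some y)

namespace EDPBridgeAux

open SimpleGraph

variable {V : Type*} {G : SimpleGraph V} {A : Set V}

/-- Lift a walk staying in `A` to the induced subgraph. -/
def toInduce : ∀ {u v : V} (p : G.Walk u v) (h : ∀ x ∈ p.support, x ∈ A),
    (G.induce A).Walk ⟨u, h u p.start_mem_support⟩ ⟨v, h v p.end_mem_support⟩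
  | u, _, SimpleGraph.Walk.cons (v := x) hadj q, h =>
      SimpleGraph.Walk.cons
        (show (G.induce A).Adj ⟨u, h u (by simp)⟩ ⟨x, h x (by simp)⟩ from hadj)
        (toInduce q (fun z hz => h z (by simp [hz])))
  | _, _, SimpleGraph.Walk.nil, _ => SimpleGraph.Walk.nil

/-- The inclusion homomorphism of an induced subgraph. -/
def inclHom (G : SimpleGraph V) (A : Set V) : G.induce A →g G :=
  ⟨Subtype.val, fun {_ _} h => h⟩

@[simp] lemma inclHom_apply (a : A) : inclHom G A a = a.val := rfl

lemma toInduce_map {u v : V} (p : G.Walk u v) (h : ∀ x ∈ p.support, x ∈ A) :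
    (toInduce p h).map (inclHom G A) = p := by
  induction p with
  | nil => rfl
  | cons hadj q ih => simp [toInduce, SimpleGraph.Walk.map_cons, ih]

lemma toInduce_edges {u v : V} (p : G.Walk u v) (h : ∀ x ∈ p.support, x ∈ A) :
    (toInduce p h).edges.map (Sym2.map Subtype.val) = p.edges := by
  conv_rhs => rw [← toInduce_map p h]
  exact (SimpleGraph.Walk.edges_map (inclHom G A) (toInduce p h)).symm

lemma toInduce_isPath {u v : V} (p : G.Walk u v) (h : ∀ x ∈ p.support, x ∈ A)
    (hp : p.IsPath) : (toInduce p h).IsPath := by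
  have : Function.Injective (inclHom G A) := Subtype.val_injective
  rw [← SimpleGraph.Walk.map_isPath_iff_of_injective this, toInduce_map]
  exact hp

section Pendant
variable {H : SimpleGraph V} {y : V}

lemma addPendant_adj_some {a b : V} : (addPendant H y).Adj (some a) (some b) ↔ H.Adj a b := by
  constructor
  · rintro (⟨-, u, v, huv, hu, hv⟩ | ⟨hne, (⟨h1, h2⟩ | ⟨h1, h2⟩)⟩)
    · obtain rfl : u = a := Option.some.inj hu
      obtain rfl : v = b := Option.some.inj hv
      exact huv
    · simp at h1
    · simp at h1
  · intro h
    exact Or.inl ⟨by simpa using h.ne, a, b, h, rfl, rfl⟩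

lemma addPendant_adj_none {b : Option V} : (addPendant H y).Adj none b ↔ b = some y := by
  constructor
  · rintro (⟨-, u, v, huv, hu, hv⟩ | ⟨hne, (⟨h1, h2⟩ | ⟨h1, h2⟩)⟩)
    · simp at hu
    · exact h2
    · simp at h2
  · rintro rfl
    exact Or.inr ⟨by simp, Or.inl ⟨rfl, rfl⟩⟩

/-- The homomorphism embedding `H` into `addPendant H y`. -/
def someHom (H : SimpleGraph V) (y : V) : H →g addPendant H y :=
  ⟨some, fun {_ _} h => addPendant_adj_some.2 h⟩

@[simp] lemma someHom_apply (a : V) : someHom H y a = some a := rfl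

end Pendant

/-- The homomorphism from the pendant graph on `Aᶜ` back into `G`, sending the
pendant vertex to `ℓ`. -/
def pendHom (G : SimpleGraph V) (A : Set V) (ℓ y : V) (hy : y ∉ A) (hadj : G.Adj ℓ y) :
    addPendant (G.induce Aᶜ) ⟨y, hy⟩ →g G where
  toFun o := o.elim ℓ Subtype.val
  map_rel' := by
    rintro (_ | a) (_ | b) h
    · exact absurd (addPendant_adj_none.1 h) (by simp)
    · obtain rfl : b = ⟨y, hy⟩ := Option.some.inj (addPendant_adj_none.1 h)
      exact hadj
    · obtain rfl : a = ⟨y, hy⟩ := Option.some.inj (addPendant_adj_none.1 h.symm)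
      exact hadj.symm
    · exact show G.Adj a.val b.val from
        (addPendant_adj_some (H := G.induce Aᶜ) (y := ⟨y, hy⟩)).1 h

@[simp] lemma pendHom_none {ℓ y : V} (hy : y ∉ A) (hadj : G.Adj ℓ y) :
    pendHom G A ℓ y hy hadj none = ℓ := rfl

@[simp] lemma pendHom_some {ℓ y : V} (hy : y ∉ A) (hadj : G.Adj ℓ y) (a : ↥Aᶜ) :
    pendHom G A ℓ y hy hadj (some a) = a.val := rfl

lemma pendHom_injective {ℓ y : V} (hℓ : ℓ ∈ A) (hy : y ∉ A)
    (hadj : G.Adj ℓ y) : Function.Injective (pendHom G A ℓ y hy hadj) := by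
  rintro (_ | a) (_ | b) h
  · rfl
  · have h' : ℓ = (b : V) := h
    exact absurd (h' ▸ hℓ) b.2
  · have h' : (a : V) = ℓ := h
    exact absurd (h' ▸ a.2) (by simp [hℓ])
  · exact congrArg some (Subtype.ext (h : (a : V) = b))

lemma isPath_append {u v w : V} {p : G.Walk u v} {q : G.Walk v w}
    (hp : p.IsPath) (hq : q.IsPath)
    (h : ∀ x, x ∈ p.support → x ∈ q.support → x = v) : (p.append q).IsPath := by
  rw [SimpleGraph.Walk.isPath_def] at *
  rw [SimpleGraph.Walk.support_append]
  apply List.Nodup.append hp (hq.sublist (List.tail_sublist _))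
  intro x hxp hxq
  have hx : x ∈ q.support := List.tail_sublist _ |>.mem hxq
  obtain rfl := h x hxp hx
  have := SimpleGraph.Walk.support_eq_cons q
  rw [this] at hq
  rw [this] at hxq
  exact (List.nodup_cons.1 hq).1 hxq

section Cross

variable {ℓ y : V}
  (huniq : ∀ x z, G.Adj x z → x ∈ A → z ∉ A → x = ℓ ∧ z = y)

include huniq

lemma cross_edge {u w : V} (p : G.Walk u w) : u ∈ A → w ∉ A → s(ℓ, y) ∈ p.edges := by
  induction p with
  | nil => exact fun hu hw => absurd hu hw
  | @cons a b c h q ih =>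
    intro hu hw
    by_cases hb : b ∈ A
    · exact List.mem_cons_of_mem _ (ih hb hw)
    · obtain ⟨rfl, rfl⟩ := huniq a b h hu hb
      exact List.mem_cons_self

variable [DecidableEq V] (hy : y ∉ A)
include hy

lemma no_bridge_of_same_side_in {u v : V} (p : G.Walk u v) (hp : p.IsPath)
    (hu : u ∈ A) (hv : v ∈ A) : s(ℓ, y) ∉ p.edges := by
  intro hbr
  have hysup : y ∈ p.support := p.snd_mem_support_of_mem_edges hbr
  have h1 : s(ℓ, y) ∈ (p.takeUntil y hysup).edges := cross_edge huniq _ hu hy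
  have h2 : s(ℓ, y) ∈ (p.dropUntil y hysup).edges := by
    have := cross_edge huniq (p.dropUntil y hysup).reverse hv hy
    rwa [SimpleGraph.Walk.edges_reverse, List.mem_reverse] at this
  have hnd := hp.isTrail.edges_nodup
  rw [← p.take_spec hysup, SimpleGraph.Walk.edges_append] at hnd
  exact List.disjoint_of_nodup_append hnd h1 h2

lemma support_of_same_side_in {u v : V} (p : G.Walk u v) (hp : p.IsPath)
    (hu : u ∈ A) (hv : v ∈ A) : ∀ x ∈ p.support, x ∈ A := by
  intro x hx
  by_contra hxA
  exact no_bridge_of_same_side_in huniq hy p hp hu hv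
    (SimpleGraph.Walk.edges_takeUntil_subset p hx (cross_edge huniq (p.takeUntil x hx) hu hxA))

omit hy in
lemma support_of_same_side_out {u v : V} (p : G.Walk u v) (hp : p.IsPath)
    (hu : u ∉ A) (hv : v ∉ A) : ∀ x ∈ p.support, x ∉ A := by
  intro x hx hxA
  have h1 : s(ℓ, y) ∈ (p.takeUntil x hx).edges := by
    have := cross_edge huniq (p.takeUntil x hx).reverse hxA hu
    rwa [SimpleGraph.Walk.edges_reverse, List.mem_reverse] at this
  have h2 : s(ℓ, y) ∈ (p.dropUntil x hx).edges := cross_edge huniq _ hxA hv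
  have hnd := hp.isTrail.edges_nodup
  rw [← p.take_spec hx, SimpleGraph.Walk.edges_append] at hnd
  exact List.disjoint_of_nodup_append hnd h1 h2

omit hy in
lemma decomp {u v : V} (p : G.Walk u v) :
    p.IsPath → u ∈ A → v ∉ A →
    ∃ (p₁ : G.Walk u ℓ) (p₂ : G.Walk y v), p₁.IsPath ∧ p₂.IsPath ∧
      (∀ e ∈ p₁.edges, e ∈ p.edges) ∧ (∀ e ∈ p₂.edges, e ∈ p.edges) ∧
      (∀ x ∈ p₁.support, x ∈ A) ∧ (∀ x ∈ p₂.support, x ∉ A) ∧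
      (∀ x ∈ p₁.support, x ∈ p.support) := by
  induction p with
  | nil => exact fun _ hu hv => absurd hu hv
  | @cons a b c h q ih =>
    intro hp hu hv
    by_cases hb : b ∈ A
    · obtain ⟨q₁, q₂, h1, h2, h3, h4, h5, h6, h7⟩ := ih hp.of_cons hb hv
      have hans : a ∉ q.support := ((SimpleGraph.Walk.cons_isPath_iff h q).1 hp).2
      refine ⟨SimpleGraph.Walk.cons h q₁, q₂, ?_, h2, ?_, ?_, ?_, h6, ?_⟩
      · exact h1.cons fun hmem => hans (h7 _ hmem)
      · intro e he
        rcases List.mem_cons.1 he with rfl | he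
        · exact List.mem_cons_self
        · exact List.mem_cons_of_mem _ (h3 _ he)
      · exact fun e he => List.mem_cons_of_mem _ (h4 _ he)
      · intro x hx
        rcases List.mem_cons.1 hx with rfl | hx
        · exact hu
        · exact h5 _ hx
      · intro x hx
        rcases List.mem_cons.1 hx with rfl | hx
        · exact SimpleGraph.Walk.start_mem_support _
        · exact List.mem_cons_of_mem _ (h7 _ hx)
    · obtain ⟨ha, hby⟩ := huniq a b h hu hb
      refine ⟨SimpleGraph.Walk.nil.copy rfl ha, q.copy hby rfl, ?_, ?_, ?_, ?_, ?_, ?_, ?_⟩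
      · rw [SimpleGraph.Walk.isPath_copy]; exact SimpleGraph.Walk.IsPath.nil
      · rw [SimpleGraph.Walk.isPath_copy]; exact hp.of_cons
      · intro e he; simp [SimpleGraph.Walk.edges_copy] at he
      · intro e he
        rw [SimpleGraph.Walk.edges_copy] at he
        exact List.mem_cons_of_mem _ he
      · intro x hx
        rw [SimpleGraph.Walk.support_copy] at hx
        simp at hx
        subst hx
        exact hu
      · intro x hx
        rw [SimpleGraph.Walk.support_copy] at hx
        exact support_of_same_side_out huniq q hp.of_cons (hby ▸ hb) hv x hx
      · intro x hx
        rw [SimpleGraph.Walk.support_copy] at hx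
        simp at hx
        subst hx
        exact SimpleGraph.Walk.start_mem_support _

end Cross

end EDPBridgeAux

open EDPBridgeAux

theorem bridge_split_one_unmatched {V : Type*} [Fintype V]
    (G : SimpleGraph V) {m : ℕ} (P : Fin m → V × V) (A : Set V) (ℓ y : V)
    (hℓ : ℓ ∈ A) (hy : y ∉ A) (hadj : G.Adj ℓ y)
    (huniq : ∀ x z, G.Adj x z → x ∈ A → z ∉ A → x = ℓ ∧ z = y)
    (i₀ : Fin m) (s t : V) (hi₀ : P i₀ = (s, t)) (hs : s ∈ A) (ht : t ∉ A)
    (hP : ∀ i, i ≠ i₀ →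
      ((P i).1 ∈ A ∧ (P i).2 ∈ A) ∨ ((P i).1 ∉ A ∧ (P i).2 ∉ A)) :
    EDPYes G P ↔
      (EDPYes (G.induce A)
          (fun i : Option {i : Fin m // (P i).1 ∈ A ∧ (P i).2 ∈ A} =>
            match i with
            | none => (⟨s, hs⟩, ⟨ℓ, hℓ⟩)
            | some i => (⟨(P i.1).1, i.2.1⟩, ⟨(P i.1).2, i.2.2⟩)) ∧
        EDPYes (addPendant (G.induce Aᶜ) ⟨y, hy⟩)
          (fun i : Option {i : Fin m // (P i).1 ∉ A ∧ (P i).2 ∉ A} =>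
            match i with
            | none => (none, some ⟨t, ht⟩)
            | some i =>
              (some ⟨(P i.1).1, i.2.1⟩, some ⟨(P i.1).2, i.2.2⟩))) := by
  classical
  constructor
  · rintro ⟨W, hWp, hWd⟩
    have hi1 : (P i₀).1 = s := by rw [hi₀]
    have hi2 : (P i₀).2 = t := by rw [hi₀]
    obtain ⟨p₁, p₂, h1, h2, h3, h4, h5, h6, _⟩ :=
      decomp huniq ((W i₀).copy hi1 hi2)
        ((SimpleGraph.Walk.isPath_copy _ _ _).2 (hWp i₀)) hs ht
    rw [SimpleGraph.Walk.edges_copy] at h3 h4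
    constructor
    · refine ⟨fun i' => match i' with
        | none => toInduce p₁ h5
        | some i => toInduce (W i.1)
            (support_of_same_side_in huniq hy (W i.1) (hWp i.1) i.2.1 i.2.2), ?_, ?_⟩
      · rintro (_ | i)
        · exact toInduce_isPath _ _ h1
        · exact toInduce_isPath _ _ (hWp i.1)
      · rintro (_ | i) (_ | j) hne e hei hej
        · exact hne rfl
        · have e1 : Sym2.map Subtype.val e ∈ p₁.edges := by
            rw [← toInduce_edges p₁ h5]; exact List.mem_map_of_mem hei
          have e2 : Sym2.map Subtype.val e ∈ (W j.1).edges := by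
            rw [← toInduce_edges (W j.1) (support_of_same_side_in huniq hy (W j.1) (hWp j.1) j.2.1 j.2.2)]; exact List.mem_map_of_mem hej
          have hj : i₀ ≠ j.1 := fun hh => ht (hi2 ▸ (hh ▸ j.2.2 : (P i₀).2 ∈ A))
          exact hWd i₀ j.1 hj _ (h3 _ e1) e2
        · have e1 : Sym2.map Subtype.val e ∈ (W i.1).edges := by
            rw [← toInduce_edges (W i.1) (support_of_same_side_in huniq hy (W i.1) (hWp i.1) i.2.1 i.2.2)]; exact List.mem_map_of_mem hei
          have e2 : Sym2.map Subtype.val e ∈ p₁.edges := by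
            rw [← toInduce_edges p₁ h5]; exact List.mem_map_of_mem hej
          have hj : i.1 ≠ i₀ := fun hh => ht (hi2 ▸ (hh ▸ i.2.2 : (P i₀).2 ∈ A))
          exact hWd i.1 i₀ hj _ e1 (h3 _ e2)
        · have e1 : Sym2.map Subtype.val e ∈ (W i.1).edges := by
            rw [← toInduce_edges (W i.1) (support_of_same_side_in huniq hy (W i.1) (hWp i.1) i.2.1 i.2.2)]; exact List.mem_map_of_mem hei
          have e2 : Sym2.map Subtype.val e ∈ (W j.1).edges := by
            rw [← toInduce_edges (W j.1) (support_of_same_side_in huniq hy (W j.1) (hWp j.1) j.2.1 j.2.2)]; exact List.mem_map_of_mem hej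
          exact hWd i.1 j.1 (fun hh => hne (congrArg some (Subtype.ext hh))) _ e1 e2
    · have h6' : ∀ x ∈ p₂.support, x ∈ (Aᶜ : Set V) := fun x hx => h6 x hx
      have hout : ∀ (i : {i : Fin m // (P i).1 ∉ A ∧ (P i).2 ∉ A}),
          ∀ x ∈ (W i.1).support, x ∈ (Aᶜ : Set V) := fun i x hx =>
        support_of_same_side_out huniq (W i.1) (hWp i.1) i.2.1 i.2.2 x hx
      have hsinj : Function.Injective (someHom (G.induce Aᶜ) (⟨y, hy⟩ : ↥Aᶜ)) :=
        Option.some_injective _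
      refine ⟨fun i' => match i' with
        | none => SimpleGraph.Walk.cons
            (show (addPendant (G.induce Aᶜ) ⟨y, hy⟩).Adj none
                (some ⟨y, h6' y p₂.start_mem_support⟩) from addPendant_adj_none.2 rfl)
            ((toInduce p₂ h6').map (someHom (G.induce Aᶜ) ⟨y, hy⟩))
        | some i => (toInduce (W i.1) (hout i)).map (someHom (G.induce Aᶜ) ⟨y, hy⟩), ?_, ?_⟩
      · rintro (_ | i)
        · refine SimpleGraph.Walk.IsPath.cons
            (SimpleGraph.Walk.map_isPath_of_injective hsinj (toInduce_isPath _ _ h2)) ?_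
          rw [SimpleGraph.Walk.support_map]
          simp
        · exact SimpleGraph.Walk.map_isPath_of_injective hsinj (toInduce_isPath _ _ (hWp i.1))
      · rintro (_ | i) (_ | j) hne e hei hej
        · exact hne rfl
        · dsimp only at hei hej
          erw [SimpleGraph.Walk.edges_map] at hej
          obtain ⟨e₁, he₁, rfl⟩ := List.mem_map.1 hej
          rcases List.mem_cons.1 hei with heq | hei'
          · have h0 : (none : Option ↥Aᶜ) ∈ Sym2.map (⇑(someHom (G.induce Aᶜ) ⟨y, hy⟩)) e₁ := by
              rw [heq]
              exact Sym2.mem_mk_left _ _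
            rw [Sym2.mem_map] at h0
            obtain ⟨a, _, ha⟩ := h0
            simp at ha
          · have hei2 : Sym2.map (⇑(someHom (G.induce Aᶜ) ⟨y, hy⟩)) e₁ ∈
                (SimpleGraph.Walk.map (someHom (G.induce Aᶜ) ⟨y, hy⟩)
                  (toInduce p₂ h6')).edges := hei'
            rw [SimpleGraph.Walk.edges_map] at hei2
            obtain ⟨e₀, he₀, heq⟩ := List.mem_map.1 hei2
            obtain rfl := Sym2.map.injective hsinj heq
            have e1 : Sym2.map Subtype.val e₀ ∈ p₂.edges := by
              rw [← toInduce_edges p₂ h6']; exact List.mem_map_of_mem he₀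
            have e2 : Sym2.map Subtype.val e₀ ∈ (W j.1).edges := by
              rw [← toInduce_edges (W j.1) (hout j)]; exact List.mem_map_of_mem he₁
            have hj : i₀ ≠ j.1 := fun hh => (hh ▸ j.2.1 : (P i₀).1 ∉ A) (hi1 ▸ hs)
            exact hWd i₀ j.1 hj _ (h4 _ e1) e2
        · dsimp only at hei hej
          erw [SimpleGraph.Walk.edges_map] at hei
          obtain ⟨e₁, he₁, rfl⟩ := List.mem_map.1 hei
          rcases List.mem_cons.1 hej with heq | hej'
          · have h0 : (none : Option ↥Aᶜ) ∈ Sym2.map (⇑(someHom (G.induce Aᶜ) ⟨y, hy⟩)) e₁ := by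
              rw [heq]
              exact Sym2.mem_mk_left _ _
            rw [Sym2.mem_map] at h0
            obtain ⟨a, _, ha⟩ := h0
            simp at ha
          · have hej2 : Sym2.map (⇑(someHom (G.induce Aᶜ) ⟨y, hy⟩)) e₁ ∈
                (SimpleGraph.Walk.map (someHom (G.induce Aᶜ) ⟨y, hy⟩)
                  (toInduce p₂ h6')).edges := hej'
            rw [SimpleGraph.Walk.edges_map] at hej2
            obtain ⟨e₀, he₀, heq⟩ := List.mem_map.1 hej2
            obtain rfl := Sym2.map.injective hsinj heq
            have e1 : Sym2.map Subtype.val e₀ ∈ (W i.1).edges := by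
              rw [← toInduce_edges (W i.1) (hout i)]; exact List.mem_map_of_mem he₁
            have e2 : Sym2.map Subtype.val e₀ ∈ p₂.edges := by
              rw [← toInduce_edges p₂ h6']; exact List.mem_map_of_mem he₀
            have hj : i.1 ≠ i₀ := fun hh => (hh ▸ i.2.1 : (P i₀).1 ∉ A) (hi1 ▸ hs)
            exact hWd i.1 i₀ hj _ e1 (h4 _ e2)
        · dsimp only at hei hej
          erw [SimpleGraph.Walk.edges_map] at hei hej
          obtain ⟨e₀, he₀, heq₀⟩ := List.mem_map.1 hei
          obtain ⟨e₁, he₁, heq₁⟩ := List.mem_map.1 hej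
          obtain rfl := Sym2.map.injective hsinj (heq₀.trans heq₁.symm)
          have e1 : Sym2.map Subtype.val e₀ ∈ (W i.1).edges := by
            rw [← toInduce_edges (W i.1) (hout i)]; exact List.mem_map_of_mem he₀
          have e2 : Sym2.map Subtype.val e₀ ∈ (W j.1).edges := by
            rw [← toInduce_edges (W j.1) (hout j)]; exact List.mem_map_of_mem he₁
          exact hWd i.1 j.1 (fun hh => hne (congrArg some (Subtype.ext hh))) _ e1 e2
  · rintro ⟨⟨U, hUp, hUd⟩, ⟨X, hXp, hXd⟩⟩
    have hginj : Function.Injective (⇑(inclHom G A)) := Subtype.val_injective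
    have hfinj := pendHom_injective (G := G) hℓ hy hadj
    have memA : ∀ (k) (e : Sym2 V), e ∈ ((U k).map (inclHom G A)).edges →
        ∀ x ∈ e, x ∈ A := by
      intro k e he x hx
      rw [SimpleGraph.Walk.edges_map] at he
      obtain ⟨e₀, _, rfl⟩ := List.mem_map.1 he
      rw [Sym2.mem_map] at hx
      obtain ⟨a, _, rfl⟩ := hx
      exact a.2
    have memO : ∀ (k) (e : Sym2 V), e ∈ ((X k).map (pendHom G A ℓ y hy hadj)).edges →
        (∀ x ∈ e, x ∉ A) ∨ e = s(ℓ, y) := by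
      intro k e he
      rw [SimpleGraph.Walk.edges_map] at he
      obtain ⟨e₀, he₀, rfl⟩ := List.mem_map.1 he
      have hes := (X k).edges_subset_edgeSet he₀
      induction e₀ using Sym2.ind with
      | _ a b =>
        rw [SimpleGraph.mem_edgeSet] at hes
        cases a with
        | none =>
          obtain rfl : b = some ⟨y, hy⟩ := addPendant_adj_none.1 hes
          right
          rw [Sym2.map_pair_eq]
          rfl
        | some a =>
          cases b with
          | none =>
            obtain rfl : a = ⟨y, hy⟩ := Option.some.inj (addPendant_adj_none.1 hes.symm)
            right
            rw [Sym2.map_pair_eq]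
            exact Sym2.eq_swap
          | some b =>
            left
            intro x hx
            rw [Sym2.mem_map] at hx
            obtain ⟨c, hc, rfl⟩ := hx
            rw [Sym2.mem_iff] at hc
            rcases hc with rfl | rfl
            · exact a.2
            · exact b.2
    have crossdisj : ∀ (kU kX) (e : Sym2 V), e ∈ ((U kU).map (inclHom G A)).edges →
        e ∈ ((X kX).map (pendHom G A ℓ y hy hadj)).edges → False := by
      intro kU kX e heU heX
      rcases memO kX e heX with hout | rfl
      · induction e using Sym2.ind with
        | _ a b => exact hout a (Sym2.mem_mk_left a b) (memA kU _ heU a (Sym2.mem_mk_left a b))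
      · exact hy (memA kU _ heU y (Sym2.mem_mk_right ℓ y))
    have disjA : ∀ k1 k2, k1 ≠ k2 → ∀ e : Sym2 V, e ∈ ((U k1).map (inclHom G A)).edges →
        e ∈ ((U k2).map (inclHom G A)).edges → False := by
      intro k1 k2 hne e h1 h2
      rw [SimpleGraph.Walk.edges_map] at h1 h2
      obtain ⟨e₀, he₀, heq₀⟩ := List.mem_map.1 h1
      obtain ⟨e₁, he₁, heq₁⟩ := List.mem_map.1 h2
      obtain rfl := Sym2.map.injective hginj (heq₀.trans heq₁.symm)
      exact hUd k1 k2 hne _ he₀ he₁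
    have disjX : ∀ k1 k2, k1 ≠ k2 → ∀ e : Sym2 V,
        e ∈ ((X k1).map (pendHom G A ℓ y hy hadj)).edges →
        e ∈ ((X k2).map (pendHom G A ℓ y hy hadj)).edges → False := by
      intro k1 k2 hne e h1 h2
      rw [SimpleGraph.Walk.edges_map] at h1 h2
      obtain ⟨e₀, he₀, heq₀⟩ := List.mem_map.1 h1
      obtain ⟨e₁, he₁, heq₁⟩ := List.mem_map.1 h2
      obtain rfl := Sym2.map.injective hfinj (heq₀.trans heq₁.symm)
      exact hXd k1 k2 hne _ he₀ he₁
    refine ⟨fun i => if h : i = i₀ then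
        (((U none).map (inclHom G A)).append ((X none).map (pendHom G A ℓ y hy hadj))).copy
          (by subst h; rw [hi₀]; exact rfl) (by subst h; rw [hi₀]; exact rfl)
      else if h2 : (P i).1 ∈ A ∧ (P i).2 ∈ A then
        (U (some ⟨i, h2⟩)).map (inclHom G A)
      else
        (X (some ⟨i, (hP i h).resolve_left h2⟩)).map (pendHom G A ℓ y hy hadj), ?_, ?_⟩
    · intro i
      by_cases h : i = i₀
      · subst h
        beta_reduce
        rw [dif_pos rfl, SimpleGraph.Walk.isPath_copy]
        refine isPath_append (SimpleGraph.Walk.map_isPath_of_injective hginj (hUp none))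
          (SimpleGraph.Walk.map_isPath_of_injective hfinj (hXp none)) ?_
        intro x hx1 hx2
        erw [SimpleGraph.Walk.support_map] at hx1 hx2
        obtain ⟨a, _, rfl⟩ := List.mem_map.1 hx1
        obtain ⟨b, _, hba⟩ := List.mem_map.1 hx2
        cases b with
        | none => exact hba.symm
        | some b =>
          have hba' : (b : V) = (a : V) := hba
          exact absurd a.2 (hba' ▸ b.2)
      · beta_reduce
        by_cases h2 : (P i).1 ∈ A ∧ (P i).2 ∈ A
        · erw [dif_neg h, dif_pos h2]
          exact SimpleGraph.Walk.map_isPath_of_injective hginj (hUp _)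
        · erw [dif_neg h, dif_neg h2]
          exact SimpleGraph.Walk.map_isPath_of_injective hfinj (hXp _)
    · intro i j hne e hei hej
      beta_reduce at hei hej
      by_cases hi : i = i₀
      · subst hi
        erw [dif_pos rfl, SimpleGraph.Walk.edges_copy, SimpleGraph.Walk.edges_append] at hei
        have hj : ¬ j = i := fun hh => hne hh.symm
        by_cases h2j : (P j).1 ∈ A ∧ (P j).2 ∈ A
        · erw [dif_neg hj, dif_pos h2j] at hej
          rcases List.mem_append.1 hei with hh | hh
          · exact disjA none (some ⟨j, h2j⟩) (by simp) e hh hej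
          · exact crossdisj (some ⟨j, h2j⟩) none e hej hh
        · erw [dif_neg hj, dif_neg h2j] at hej
          rcases List.mem_append.1 hei with hh | hh
          · exact crossdisj none (some _) e hh hej
          · exact disjX none (some _) (by simp) e hh hej
      · by_cases hj : j = i₀
        · subst hj
          erw [dif_pos rfl, SimpleGraph.Walk.edges_copy, SimpleGraph.Walk.edges_append] at hej
          by_cases h2i : (P i).1 ∈ A ∧ (P i).2 ∈ A
          · erw [dif_neg hi, dif_pos h2i] at hei
            rcases List.mem_append.1 hej with hh | hh
            · exact disjA (some ⟨i, h2i⟩) none (by simp) e hei hh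
            · exact crossdisj (some ⟨i, h2i⟩) none e hei hh
          · erw [dif_neg hi, dif_neg h2i] at hei
            rcases List.mem_append.1 hej with hh | hh
            · exact crossdisj none (some _) e hh hei
            · exact disjX (some _) none (by simp) e hei hh
        · by_cases h2i : (P i).1 ∈ A ∧ (P i).2 ∈ A <;>
            by_cases h2j : (P j).1 ∈ A ∧ (P j).2 ∈ A
          · erw [dif_neg hi, dif_pos h2i] at hei
            erw [dif_neg hj, dif_pos h2j] at hej
            exact disjA (some ⟨i, h2i⟩) (some ⟨j, h2j⟩)
              (fun hh => hne (congrArg Subtype.val (Option.some_injective _ hh))) e hei hej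
          · erw [dif_neg hi, dif_pos h2i] at hei
            erw [dif_neg hj, dif_neg h2j] at hej
            exact crossdisj (some ⟨i, h2i⟩) (some _) e hei hej
          · erw [dif_neg hi, dif_neg h2i] at hei
            erw [dif_neg hj, dif_pos h2j] at hej
            exact crossdisj (some ⟨j, h2j⟩) (some _) e hej hei
          · erw [dif_neg hi, dif_neg h2i] at hei
            erw [dif_neg hj, dif_neg h2j] at hej
            exact disjX (some _) (some _)
              (fun hh => hne (congrArg Subtype.val (Option.some_injective _ hh))) e hei hej
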